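/- Key averaging identity (Lemma on T_{k,d}): for any b ∈ ℂ, integers k and d with d ≠ 0, in the Weyl superalgebra the element (1/(4d²))(σ_b(L_{-d})σ_b(G^+_{k+d}) + σ_b(L_d)σ_b(G^+_{k-d}) - 2σ_b(L_0)σ_b(G^+_k)) equals b(1-2b)·tᵏθ. In particular if b ∉ {0, 1/2}, tᵏθ lies in the associative subalgebra generated by the operators σ_b(L_m), σ_b(G^+_n). -/

import Mathlib

/-- `t^k` for `k : ℤ`, using `tinv` for negative powers. -/
noncomputable def tzpow {R : Type*} [Ring R] (t tinv : R) (k : ℤ) : R :=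
  if 0 ≤ k then t ^ k.toNat else tinv ^ (-k).toNat

/-- `σ_b(L_m) = -tᵐD - (m/2)tᵐθ∂_θ - mb tᵐ` with `D = t∂_t`. -/
noncomputable def sigL {R : Type*} [Ring R] [Algebra ℂ R] (t tinv dt th dth : R)
    (b : ℂ) (m : ℤ) : R :=
  -(tzpow t tinv m * (t * dt)) - ((m : ℂ) / 2) • (tzpow t tinv m * (th * dth))
    - ((m : ℂ) * b) • tzpow t tinv m

/-- `σ_b(G⁺_m) = -2tᵐθD - 4bm tᵐθ`. -/
noncomputable def sigGp {R : Type*} [Ring R] [Algebra ℂ R] (t tinv dt th dth : R)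
    (b : ℂ) (m : ℤ) : R :=
  (-2 : ℂ) • (tzpow t tinv m * (th * (t * dt))) - (4 * b * (m : ℂ)) • (tzpow t tinv m * th)

section Aux
variable {R : Type*} [Ring R]

lemma swapA {a c : R} (h : a * c = c * a) (x : R) : a * (c * x) = c * (a * x) := by
  rw [← mul_assoc, h, mul_assoc]

lemma tzpow_eq (t tinv : R) (h2 : t * tinv = 1) (h3 : tinv * t = 1) (k : ℤ) :
    tzpow t tinv k = (((⟨t, tinv, h2, h3⟩ : Rˣ) : Rˣ) ^ k : Rˣ) := by
  rcases le_or_gt 0 k with h | h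
  · rw [tzpow, if_pos h]
    lift k to ℕ using h
    rw [zpow_natCast, Units.val_pow_eq_pow_val]
    simp
  · rw [tzpow, if_neg (not_le.2 h)]
    have hk : k = -(((-k).toNat : ℕ) : ℤ) := by omega
    rw [hk, zpow_neg, zpow_natCast, ← inv_pow, Units.val_pow_eq_pow_val]
    simp [Units.inv_mk]
    congr 1
    omega

lemma tzpow_add (t tinv : R) (h2 : t * tinv = 1) (h3 : tinv * t = 1) (a c : ℤ) :
    tzpow t tinv a * tzpow t tinv c = tzpow t tinv (a + c) := by
  rw [tzpow_eq t tinv h2 h3, tzpow_eq t tinv h2 h3, tzpow_eq t tinv h2 h3,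
    ← Units.val_mul, ← zpow_add]

lemma tzpow_zero (t tinv : R) : tzpow t tinv 0 = 1 := by simp [tzpow]

lemma tzpow_one (t tinv : R) : tzpow t tinv 1 = t := by simp [tzpow]

lemma tzpow_neg_one (t tinv : R) : tzpow t tinv (-1) = tinv := by
  simp [tzpow]

lemma tzpow_comm (t tinv : R) {a : R} (h7 : t * a = a * t) (h11 : tinv * a = a * tinv) (k : ℤ) :
    tzpow t tinv k * a = a * tzpow t tinv k := by
  unfold tzpow; split
  · exact (Commute.pow_left h7 _)
  · exact (Commute.pow_left h11 _)

/-- `Tn * (Tm * x) = T(n+m) * x` -/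
lemma TTmul (t tinv : R) (h2 : t * tinv = 1) (h3 : tinv * t = 1) (n m : ℤ) (x : R) :
    tzpow t tinv n * (tzpow t tinv m * x) = tzpow t tinv (n + m) * x := by
  rw [← mul_assoc, tzpow_add t tinv h2 h3]

variable (t tinv dt th dth : R)

lemma Dt (h1 : dt * t - t * dt = 1) : (t * dt) * t = t * (t * dt) + t := by
  have e1 : dt * t = t * dt + 1 := by
    have := h1; rw [sub_eq_iff_eq_add] at this; rw [this, add_comm]
  rw [mul_assoc, e1, mul_add, mul_one, ← mul_assoc]

lemma Dtinv (h1 : dt * t - t * dt = 1) (h2 : t * tinv = 1) (h3 : tinv * t = 1) :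
    (t * dt) * tinv = tinv * (t * dt) - tinv := by
  have e1 : dt * t = t * dt + 1 := by
    have := h1; rw [sub_eq_iff_eq_add] at this; rw [this, add_comm]
  have e2 : tinv * dt = dt * tinv + tinv * tinv := by
    have e3 : tinv * (dt * t) * tinv = tinv * (t * dt + 1) * tinv := by rw [e1]
    calc tinv * dt = tinv * dt * (t * tinv) := by rw [h2, mul_one]
      _ = tinv * (dt * t) * tinv := by rw [← mul_assoc, ← mul_assoc]
      _ = tinv * (t * dt + 1) * tinv := e3
      _ = (tinv * t) * dt * tinv + tinv * tinv := by noncomm_ring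
      _ = dt * tinv + tinv * tinv := by rw [h3, one_mul]
  have e4 : dt * tinv = tinv * dt - tinv * tinv := by rw [e2]; abel
  calc (t * dt) * tinv = t * (dt * tinv) := by rw [mul_assoc]
    _ = t * (tinv * dt) - t * (tinv * tinv) := by rw [e4, mul_sub]
    _ = (t * tinv) * dt - (t * tinv) * tinv := by rw [mul_assoc, mul_assoc]
    _ = dt - tinv := by rw [h2, one_mul, one_mul]
    _ = tinv * (t * dt) - tinv := by rw [← mul_assoc, h3, one_mul]
end Aux

section Aux2
variable {R : Type*} [Ring R] [Algebra ℂ R] (t tinv dt th dth : R)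

/-- `[D, T^k] = k T^k` -/
lemma DTz (h1 : dt * t - t * dt = 1) (h2 : t * tinv = 1) (h3 : tinv * t = 1) (k : ℤ) :
    (t * dt) * tzpow t tinv k = tzpow t tinv k * (t * dt) + (k : ℂ) • tzpow t tinv k := by
  induction k using Int.induction_on with
  | zero => simp [tzpow_zero]
  | succ k ih =>
      have hT : tzpow t tinv (k : ℤ) * t = tzpow t tinv ((k : ℤ) + 1) := by
        have := tzpow_add t tinv h2 h3 k 1
        rwa [tzpow_one] at this
      rw [← hT]
      push_cast
      rw [← mul_assoc, ih, add_mul]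
      have e : tzpow t tinv (k : ℤ) * (t * dt) * t
          = tzpow t tinv (k : ℤ) * t * (t * dt) + tzpow t tinv (k : ℤ) * t := by
        rw [mul_assoc, Dt t dt h1, mul_add, ← mul_assoc]
      rw [e, smul_mul_assoc]
      module
  | pred k ih =>
      have hT : tzpow t tinv (-(k : ℤ)) * tinv = tzpow t tinv (-(k : ℤ) - 1) := by
        have := tzpow_add t tinv h2 h3 (-(k : ℤ)) (-1)
        rwa [tzpow_neg_one] at this
      rw [← hT]
      push_cast
      rw [← mul_assoc, ih, add_mul]
      have e : tzpow t tinv (-(k : ℤ)) * (t * dt) * tinv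
          = tzpow t tinv (-(k : ℤ)) * tinv * (t * dt) - tzpow t tinv (-(k : ℤ)) * tinv := by
        rw [mul_assoc, Dtinv t tinv dt h1 h2 h3, mul_sub, ← mul_assoc]
      rw [e, smul_mul_assoc]
      module

/-- `D * (Tk * x) = Tk * (D * x) + k • (Tk * x)` -/
lemma DTz' (h1 : dt * t - t * dt = 1) (h2 : t * tinv = 1) (h3 : tinv * t = 1) (k : ℤ) (x : R) :
    (t * dt) * (tzpow t tinv k * x)
      = tzpow t tinv k * ((t * dt) * x) + (k : ℂ) • (tzpow t tinv k * x) := by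
  rw [← mul_assoc, DTz t tinv dt h1 h2 h3, add_mul, mul_assoc, smul_mul_assoc]

lemma cDth (h7 : t * th = th * t) (h9 : dt * th = th * dt) :
    (t * dt) * th = th * (t * dt) := by
  rw [mul_assoc, h9, ← mul_assoc, h7, mul_assoc]

lemma cTthdth (h7 : t * th = th * t) (h8 : t * dth = dth * t)
    (h11 : tinv * th = th * tinv) (h12 : tinv * dth = dth * tinv) (k : ℤ) :
    tzpow t tinv k * (th * dth) = (th * dth) * tzpow t tinv k := by
  refine tzpow_comm t tinv ?_ ?_ k
  · rw [← mul_assoc, h7, mul_assoc, h8, ← mul_assoc]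
  · rw [← mul_assoc, h11, mul_assoc, h12, ← mul_assoc]

lemma thdthth (h4 : dth * th + th * dth = 1) (h5 : th * th = 0) :
    (th * dth) * th = th := by
  have e : dth * th = 1 - th * dth := by
    rw [eq_sub_iff_add_eq]; exact h4
  rw [mul_assoc, e, mul_sub, mul_one, ← mul_assoc, h5, zero_mul, sub_zero]

end Aux2

section Prods
variable {R : Type*} [Ring R] [Algebra ℂ R]

lemma P1 (t tinv dt th : R)
    (h1 : dt * t - t * dt = 1) (h2 : t * tinv = 1) (h3 : tinv * t = 1)
    (h7 : t * th = th * t) (h9 : dt * th = th * dt) (n m : ℤ) :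
    (tzpow t tinv n * (t * dt)) * (tzpow t tinv m * (th * (t * dt)))
      = tzpow t tinv (n + m) * (th * ((t * dt) * (t * dt)))
        + (m : ℂ) • (tzpow t tinv (n + m) * (th * (t * dt))) := by
  rw [mul_assoc, DTz' t tinv dt h1 h2 h3, mul_add, mul_smul_comm,
    swapA (cDth t dt th h7 h9), TTmul t tinv h2 h3, TTmul t tinv h2 h3]

lemma P2 (t tinv dt th : R)
    (h1 : dt * t - t * dt = 1) (h2 : t * tinv = 1) (h3 : tinv * t = 1)
    (h7 : t * th = th * t) (h9 : dt * th = th * dt) (n m : ℤ) :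
    (tzpow t tinv n * (t * dt)) * (tzpow t tinv m * th)
      = tzpow t tinv (n + m) * (th * (t * dt))
        + (m : ℂ) • (tzpow t tinv (n + m) * th) := by
  rw [mul_assoc, DTz' t tinv dt h1 h2 h3, mul_add, mul_smul_comm,
    cDth t dt th h7 h9, TTmul t tinv h2 h3, TTmul t tinv h2 h3]

lemma P3 (t tinv dt th dth : R)
    (h2 : t * tinv = 1) (h3 : tinv * t = 1)
    (h4 : dth * th + th * dth = 1) (h5 : th * th = 0)
    (h7 : t * th = th * t) (h8 : t * dth = dth * t)
    (h11 : tinv * th = th * tinv) (h12 : tinv * dth = dth * tinv) (n m : ℤ) :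
    (tzpow t tinv n * (th * dth)) * (tzpow t tinv m * (th * (t * dt)))
      = tzpow t tinv (n + m) * (th * (t * dt)) := by
  rw [mul_assoc, swapA (cTthdth t tinv th dth h7 h8 h11 h12 m).symm,
    ← mul_assoc (th * dth), thdthth th dth h4 h5, TTmul t tinv h2 h3]

lemma P4 (t tinv th dth : R)
    (h2 : t * tinv = 1) (h3 : tinv * t = 1)
    (h4 : dth * th + th * dth = 1) (h5 : th * th = 0)
    (h7 : t * th = th * t) (h8 : t * dth = dth * t)
    (h11 : tinv * th = th * tinv) (h12 : tinv * dth = dth * tinv) (n m : ℤ) :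
    (tzpow t tinv n * (th * dth)) * (tzpow t tinv m * th)
      = tzpow t tinv (n + m) * th := by
  rw [mul_assoc, swapA (cTthdth t tinv th dth h7 h8 h11 h12 m).symm,
    thdthth th dth h4 h5, TTmul t tinv h2 h3]

lemma LG (t tinv dt th dth : R)
    (h1 : dt * t - t * dt = 1) (h2 : t * tinv = 1) (h3 : tinv * t = 1)
    (h4 : dth * th + th * dth = 1) (h5 : th * th = 0)
    (h7 : t * th = th * t) (h8 : t * dth = dth * t)
    (h9 : dt * th = th * dt)
    (h11 : tinv * th = th * tinv) (h12 : tinv * dth = dth * tinv)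
    (b : ℂ) (n m : ℤ) :
    sigL t tinv dt th dth b n * sigGp t tinv dt th dth b m
      = (2 : ℂ) • (tzpow t tinv (n + m) * (th * ((t * dt) * (t * dt))))
        + (2 * (m : ℂ) + 4 * b * m + n + 2 * n * b) • (tzpow t tinv (n + m) * (th * (t * dt)))
        + (4 * b * (m : ℂ) ^ 2 + 2 * b * m * n + 4 * b ^ 2 * n * m) •
            (tzpow t tinv (n + m) * th) := by
  unfold sigL sigGp
  simp only [sub_mul, mul_sub, neg_mul, mul_neg, neg_neg, smul_mul_assoc, mul_smul_comm,
    smul_smul, neg_smul, smul_neg, smul_sub, smul_add]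
  rw [P1 t tinv dt th h1 h2 h3 h7 h9 n m,
      P2 t tinv dt th h1 h2 h3 h7 h9 n m,
      P3 t tinv dt th dth h2 h3 h4 h5 h7 h8 h11 h12 n m,
      P4 t tinv th dth h2 h3 h4 h5 h7 h8 h11 h12 n m,
      TTmul t tinv h2 h3 n m, TTmul t tinv h2 h3 n m]
  match_scalars <;> ring

end Prods

/-- Key averaging identity: in the Weyl superalgebra, for any `b ∈ ℂ`, `k ∈ ℤ` and
`d ∈ ℤ*`, the element
`(1/(4d²))(σ_b(L_{-d})σ_b(G⁺_{k+d}) + σ_b(L_d)σ_b(G⁺_{k-d}) - 2σ_b(L_0)σ_b(G⁺_k))`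
equals `b(1-2b) tᵏθ`; in particular, if `b ∉ {0, 1/2}` then `tᵏθ` lies in the
subalgebra generated by the operators `σ_b(L_m)` and `σ_b(G⁺_n)`. -/
theorem stmt11 {R : Type*} [Ring R] [Algebra ℂ R] (t tinv dt th dth : R) (b : ℂ)
    (h1 : dt * t - t * dt = 1) (h2 : t * tinv = 1) (h3 : tinv * t = 1)
    (h4 : dth * th + th * dth = 1) (h5 : th * th = 0) (h6 : dth * dth = 0)
    (h7 : t * th = th * t) (h8 : t * dth = dth * t)
    (h9 : dt * th = th * dt) (h10 : dt * dth = dth * dt)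
    (h11 : tinv * th = th * tinv) (h12 : tinv * dth = dth * tinv) :
    ∀ k d : ℤ, d ≠ 0 →
      (1 / (4 * (d : ℂ) ^ 2)) •
          (sigL t tinv dt th dth b (-d) * sigGp t tinv dt th dth b (k + d)
            + sigL t tinv dt th dth b d * sigGp t tinv dt th dth b (k - d)
            - (2 : ℂ) • (sigL t tinv dt th dth b 0 * sigGp t tinv dt th dth b k))
        = (b * (1 - 2 * b)) • (tzpow t tinv k * th) ∧
      (b ≠ 0 → b ≠ 1/2 →
        tzpow t tinv k * th ∈ Algebra.adjoin ℂ
          {x : R | ∃ m : ℤ, x = sigL t tinv dt th dth b m ∨ x = sigGp t tinv dt th dth b m}) := by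
  intro k d hd
  have hd' : (d : ℂ) ≠ 0 := Int.cast_ne_zero.mpr hd
  have key : (1 / (4 * (d : ℂ) ^ 2)) •
          (sigL t tinv dt th dth b (-d) * sigGp t tinv dt th dth b (k + d)
            + sigL t tinv dt th dth b d * sigGp t tinv dt th dth b (k - d)
            - (2 : ℂ) • (sigL t tinv dt th dth b 0 * sigGp t tinv dt th dth b k))
        = (b * (1 - 2 * b)) • (tzpow t tinv k * th) := by
    rw [LG t tinv dt th dth h1 h2 h3 h4 h5 h7 h8 h9 h11 h12 b (-d) (k + d),
        LG t tinv dt th dth h1 h2 h3 h4 h5 h7 h8 h9 h11 h12 b d (k - d),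
        LG t tinv dt th dth h1 h2 h3 h4 h5 h7 h8 h9 h11 h12 b 0 k,
        show -d + (k + d) = k by ring, show d + (k - d) = k by ring,
        show (0 : ℤ) + k = k by ring]
    match_scalars <;> (push_cast; field_simp; ring)
  refine ⟨key, fun hb0 hb2 => ?_⟩
  set S := Algebra.adjoin ℂ
      {x : R | ∃ m : ℤ, x = sigL t tinv dt th dth b m ∨ x = sigGp t tinv dt th dth b m} with hS
  have hc : b * (1 - 2 * b) ≠ 0 := by
    refine mul_ne_zero hb0 ?_
    intro h
    apply hb2
    linear_combination -h / 2
  have hmemL : ∀ m : ℤ, sigL t tinv dt th dth b m ∈ S :=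
    fun m => Algebra.subset_adjoin ⟨m, Or.inl rfl⟩
  have hmemG : ∀ m : ℤ, sigGp t tinv dt th dth b m ∈ S :=
    fun m => Algebra.subset_adjoin ⟨m, Or.inr rfl⟩
  have heq : tzpow t tinv k * th
      = (b * (1 - 2 * b))⁻¹ • ((1 / (4 * (d : ℂ) ^ 2)) •
          (sigL t tinv dt th dth b (-d) * sigGp t tinv dt th dth b (k + d)
            + sigL t tinv dt th dth b d * sigGp t tinv dt th dth b (k - d)
            - (2 : ℂ) • (sigL t tinv dt th dth b 0 * sigGp t tinv dt th dth b k))) := by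
    rw [key, smul_smul, inv_mul_cancel₀ hc, one_smul]
  rw [heq]
  exact S.smul_mem (S.smul_mem (sub_mem (add_mem (mul_mem (hmemL _) (hmemG _))
    (mul_mem (hmemL _) (hmemG _))) (S.smul_mem (mul_mem (hmemL _) (hmemG _)) _)) _) _
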